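/- The convex hull in ℝ^3 of the twelve points obtained by permuting the coordinates of (1,5,13) and of (2,3,14) equals the set { x ∈ ℝ^3 : x_1 + x_2 + x_3 = 19, and for every ordered pair (i,j) of distinct elements of {1,2,3}: x_j ≥ 1, x_i + x_j ≥ 5, and x_i + 2x_j ≥ 7 }. -/

import Mathlib

set_option maxHeartbeats 4000000

@[simp] private lemma vec3_two {α : Type*} (a b c : α) : ![a, b, c] 2 = c := rfl

private lemma combo3 {s : Set (Fin 3 → ℝ)} {p q r x : Fin 3 → ℝ}
    (hp : p ∈ convexHull ℝ s) (hq : q ∈ convexHull ℝ s) (hr : r ∈ convexHull ℝ s)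
    {a b c : ℝ} (ha : 0 ≤ a) (hb : 0 ≤ b) (hc : 0 ≤ c) (habc : a + b + c = 1)
    (hx0 : x 0 = a * p 0 + b * q 0 + c * r 0)
    (hx1 : x 1 = a * p 1 + b * q 1 + c * r 1)
    (hx2 : x 2 = a * p 2 + b * q 2 + c * r 2) : x ∈ convexHull ℝ s := by
  have hconv := convex_convexHull ℝ s
  have hmem : ∑ i : Fin 3, (![a,b,c]) i • (![p,q,r]) i ∈ convexHull ℝ s := by
    refine hconv.sum_mem ?_ ?_ ?_
    · intro i _; fin_cases i <;> simpa
    · rw [Fin.sum_univ_three]; simpa using habc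
    · intro i _; fin_cases i <;> simpa
  have hxe : x = ∑ i : Fin 3, (![a,b,c]) i • (![p,q,r]) i := by
    funext j
    rw [Fin.sum_univ_three]
    fin_cases j
    · simpa using hx0
    · simpa using hx1
    · simpa using hx2
  rwa [hxe]

private lemma perm_mem (v : Fin 3 → ℝ) (h19 : v 0 + v 1 + v 2 = 19)
    (hkey : ∀ a b : Fin 3, a ≠ b → 1 ≤ v b ∧ 5 ≤ v a + v b ∧ 7 ≤ v a + 2 * v b)
    (σ : Equiv.Perm (Fin 3)) :
    (v ∘ σ) 0 + (v ∘ σ) 1 + (v ∘ σ) 2 = 19 ∧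
      ∀ i j : Fin 3, i ≠ j → 1 ≤ (v ∘ σ) j ∧ 5 ≤ (v ∘ σ) i + (v ∘ σ) j ∧
        7 ≤ (v ∘ σ) i + 2 * (v ∘ σ) j := by
  constructor
  · have h := Equiv.sum_comp σ v
    rw [Fin.sum_univ_three, Fin.sum_univ_three] at h
    show v (σ 0) + v (σ 1) + v (σ 2) = 19
    rw [h, h19]
  · intro i j hij
    exact hkey (σ i) (σ j) (fun hh => hij (σ.injective hh))

theorem stmt_14 :
    convexHull ℝ
        (Set.range (fun σ : Equiv.Perm (Fin 3) => ![(1 : ℝ), 5, 13] ∘ σ) ∪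
          Set.range (fun σ : Equiv.Perm (Fin 3) => ![(2 : ℝ), 3, 14] ∘ σ)) =
      {x : Fin 3 → ℝ | x 0 + x 1 + x 2 = 19 ∧
        ∀ i j : Fin 3, i ≠ j →
          1 ≤ x j ∧ 5 ≤ x i + x j ∧ 7 ≤ x i + 2 * x j} := by
  apply Set.Subset.antisymm
  · apply convexHull_min
    · rintro x (⟨σ, rfl⟩ | ⟨σ, rfl⟩)
      · exact perm_mem _ (by norm_num) (by
          intro a b hab
          fin_cases a <;> fin_cases b <;>
            first
              | exact absurd rfl hab
              | (refine ⟨by norm_num, by norm_num, by norm_num⟩)) σ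
      · exact perm_mem _ (by norm_num) (by
          intro a b hab
          fin_cases a <;> fin_cases b <;>
            first
              | exact absurd rfl hab
              | (refine ⟨by norm_num, by norm_num, by norm_num⟩)) σ
    · rintro y ⟨hy1, hy2⟩ z ⟨hz1, hz2⟩ a b ha hb hab
      refine ⟨?_, ?_⟩
      · show a * y 0 + b * z 0 + (a * y 1 + b * z 1) + (a * y 2 + b * z 2) = 19
        linear_combination a * hy1 + b * hz1 + 19 * hab
      · intro i j hij
        obtain ⟨p1, p2, p3⟩ := hy2 i j hij
        obtain ⟨q1, q2, q3⟩ := hz2 i j hij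
        refine ⟨?_, ?_, ?_⟩ <;>
          · show (_ : ℝ) ≤ _
            simp only [Pi.add_apply, Pi.smul_apply, smul_eq_mul]
            nlinarith [mul_le_mul_of_nonneg_left p1 ha, mul_le_mul_of_nonneg_left q1 hb,
              mul_le_mul_of_nonneg_left p2 ha, mul_le_mul_of_nonneg_left q2 hb,
              mul_le_mul_of_nonneg_left p3 ha, mul_le_mul_of_nonneg_left q3 hb]
  · set S := (Set.range (fun σ : Equiv.Perm (Fin 3) => ![(1 : ℝ), 5, 13] ∘ σ) ∪
          Set.range (fun σ : Equiv.Perm (Fin 3) => ![(2 : ℝ), 3, 14] ∘ σ)) with hS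
    rintro x ⟨hsum, hineq⟩
    obtain ⟨a01, b01, c01⟩ := hineq 0 1 (by decide)
    obtain ⟨a10, b10, c10⟩ := hineq 1 0 (by decide)
    obtain ⟨a02, b02, c02⟩ := hineq 0 2 (by decide)
    obtain ⟨a20, b20, c20⟩ := hineq 2 0 (by decide)
    obtain ⟨a12, b12, c12⟩ := hineq 1 2 (by decide)
    obtain ⟨a21, b21, c21⟩ := hineq 2 1 (by decide)
    have h_1_5_13 : ![(1 : ℝ), 5, 13] ∈ convexHull ℝ S := by
      apply subset_convexHull
      refine Set.mem_union_left _ ⟨(Equiv.refl (Fin 3)), ?_⟩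
      funext i; fin_cases i <;> rfl
    have h_1_13_5 : ![(1 : ℝ), 13, 5] ∈ convexHull ℝ S := by
      apply subset_convexHull
      refine Set.mem_union_left _ ⟨(Equiv.swap 1 2), ?_⟩
      funext i; fin_cases i <;> rfl
    have h_5_1_13 : ![(5 : ℝ), 1, 13] ∈ convexHull ℝ S := by
      apply subset_convexHull
      refine Set.mem_union_left _ ⟨(Equiv.swap 0 1), ?_⟩
      funext i; fin_cases i <;> rfl
    have h_5_13_1 : ![(5 : ℝ), 13, 1] ∈ convexHull ℝ S := by
      apply subset_convexHull
      refine Set.mem_union_left _ ⟨((Equiv.swap 0 1).trans (Equiv.swap 0 2)), ?_⟩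
      funext i; fin_cases i <;> rfl
    have h_13_1_5 : ![(13 : ℝ), 1, 5] ∈ convexHull ℝ S := by
      apply subset_convexHull
      refine Set.mem_union_left _ ⟨((Equiv.swap 0 1).trans (Equiv.swap 1 2)), ?_⟩
      funext i; fin_cases i <;> rfl
    have h_13_5_1 : ![(13 : ℝ), 5, 1] ∈ convexHull ℝ S := by
      apply subset_convexHull
      refine Set.mem_union_left _ ⟨(Equiv.swap 0 2), ?_⟩
      funext i; fin_cases i <;> rfl
    have h_2_3_14 : ![(2 : ℝ), 3, 14] ∈ convexHull ℝ S := by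
      apply subset_convexHull
      refine Set.mem_union_right _ ⟨(Equiv.refl (Fin 3)), ?_⟩
      funext i; fin_cases i <;> rfl
    have h_2_14_3 : ![(2 : ℝ), 14, 3] ∈ convexHull ℝ S := by
      apply subset_convexHull
      refine Set.mem_union_right _ ⟨(Equiv.swap 1 2), ?_⟩
      funext i; fin_cases i <;> rfl
    have h_3_2_14 : ![(3 : ℝ), 2, 14] ∈ convexHull ℝ S := by
      apply subset_convexHull
      refine Set.mem_union_right _ ⟨(Equiv.swap 0 1), ?_⟩
      funext i; fin_cases i <;> rfl
    have h_3_14_2 : ![(3 : ℝ), 14, 2] ∈ convexHull ℝ S := by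
      apply subset_convexHull
      refine Set.mem_union_right _ ⟨((Equiv.swap 0 1).trans (Equiv.swap 0 2)), ?_⟩
      funext i; fin_cases i <;> rfl
    have h_14_2_3 : ![(14 : ℝ), 2, 3] ∈ convexHull ℝ S := by
      apply subset_convexHull
      refine Set.mem_union_right _ ⟨((Equiv.swap 0 1).trans (Equiv.swap 1 2)), ?_⟩
      funext i; fin_cases i <;> rfl
    have h_14_3_2 : ![(14 : ℝ), 3, 2] ∈ convexHull ℝ S := by
      apply subset_convexHull
      refine Set.mem_union_right _ ⟨(Equiv.swap 0 2), ?_⟩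
      funext i; fin_cases i <;> rfl
    have hO : ![(19/3 : ℝ), 19/3, 19/3] ∈ convexHull ℝ S := by
      refine combo3 h_1_5_13 h_5_13_1 h_13_1_5 (a := 1/3) (b := 1/3) (c := 1/3) (by norm_num) (by norm_num) (by norm_num) (by norm_num) ?_ ?_ ?_ <;> norm_num
    have h_1_9_9 : ![(1 : ℝ), 9, 9] ∈ convexHull ℝ S := by
      refine combo3 h_1_5_13 h_1_13_5 h_1_13_5 (a := 1/2) (b := 1/2) (c := 0) (by norm_num) (by norm_num) (by norm_num) (by norm_num) ?_ ?_ ?_ <;> norm_num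
    have h_9_1_9 : ![(9 : ℝ), 1, 9] ∈ convexHull ℝ S := by
      refine combo3 h_5_1_13 h_13_1_5 h_13_1_5 (a := 1/2) (b := 1/2) (c := 0) (by norm_num) (by norm_num) (by norm_num) (by norm_num) ?_ ?_ ?_ <;> norm_num
    have h_9_9_1 : ![(9 : ℝ), 9, 1] ∈ convexHull ℝ S := by
      refine combo3 h_5_13_1 h_13_5_1 h_13_5_1 (a := 1/2) (b := 1/2) (c := 0) (by norm_num) (by norm_num) (by norm_num) (by norm_num) ?_ ?_ ?_ <;> norm_num
    have h_5d2_5d2_14 : ![(5/2 : ℝ), 5/2, 14] ∈ convexHull ℝ S := by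
      refine combo3 h_2_3_14 h_3_2_14 h_3_2_14 (a := 1/2) (b := 1/2) (c := 0) (by norm_num) (by norm_num) (by norm_num) (by norm_num) ?_ ?_ ?_ <;> norm_num
    have h_5d2_14_5d2 : ![(5/2 : ℝ), 14, 5/2] ∈ convexHull ℝ S := by
      refine combo3 h_2_14_3 h_3_14_2 h_3_14_2 (a := 1/2) (b := 1/2) (c := 0) (by norm_num) (by norm_num) (by norm_num) (by norm_num) ?_ ?_ ?_ <;> norm_num
    have h_14_5d2_5d2 : ![(14 : ℝ), 5/2, 5/2] ∈ convexHull ℝ S := by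
      refine combo3 h_14_2_3 h_14_3_2 h_14_3_2 (a := 1/2) (b := 1/2) (c := 0) (by norm_num) (by norm_num) (by norm_num) (by norm_num) ?_ ?_ ?_ <;> norm_num
    rcases le_total (x 0) (x 1) with h1 | h1 <;> rcases le_total (x 1) (x 2) with h2 | h2 <;> rcases le_total (x 0) (x 2) with h3 | h3
    · rcases le_total (2 * x 0 - 3 * x 1 + x 2) 0 with hL1 | hL1
      · -- triangle 1
        refine combo3 hO h_1_9_9 h_1_5_13 (a := ((27/152) * x 0 + (-3/304) * x 1 + (-3/304) * x 2)) (b := ((-1/8) * x 0 + (3/16) * x 1 + (-1/16) * x 2)) (c := ((-1/8) * x 1 + (1/8) * x 2)) (by linarith) (by linarith) (by linarith) (by linarith) ?_ ?_ ?_ <;> (norm_num; try linarith)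
      rcases le_total (11 * x 0 - 12 * x 1 + x 2) 0 with hL2 | hL2
      · -- triangle 2
        refine combo3 hO h_1_5_13 h_2_3_14 (a := ((31/228) * x 0 + (1/19) * x 1 + (-7/228) * x 2)) (b := ((-11/36) * x 0 + (1/3) * x 1 + (-1/36) * x 2)) (c := ((2/9) * x 0 + (-1/3) * x 1 + (1/9) * x 2)) (by linarith) (by linarith) (by linarith) (by linarith) ?_ ?_ ?_ <;> (norm_num; try linarith)
      · -- triangle 3
        refine combo3 hO h_2_3_14 h_5d2_5d2_14 (a := ((42/437) * x 0 + (42/437) * x 1 + (-15/437) * x 2)) (b := ((-1) * x 0 + (1) * x 1)) (c := ((22/23) * x 0 + (-24/23) * x 1 + (2/23) * x 2)) (by linarith) (by linarith) (by linarith) (by linarith) ?_ ?_ ?_ <;> (norm_num; try linarith)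
    · refine combo3 hO hO hO (a := 1) (b := 0) (c := 0) (by norm_num) (by norm_num) (by norm_num) (by norm_num) ?_ ?_ ?_ <;> (norm_num; linarith)
    · rcases le_total (2 * x 0 - 3 * x 2 + x 1) 0 with hL1 | hL1
      · -- triangle 1
        refine combo3 hO h_1_9_9 h_1_13_5 (a := ((27/152) * x 0 + (-3/304) * x 1 + (-3/304) * x 2)) (b := ((-1/8) * x 0 + (-1/16) * x 1 + (3/16) * x 2)) (c := ((1/8) * x 1 + (-1/8) * x 2)) (by linarith) (by linarith) (by linarith) (by linarith) ?_ ?_ ?_ <;> (norm_num; try linarith)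
      rcases le_total (11 * x 0 - 12 * x 2 + x 1) 0 with hL2 | hL2
      · -- triangle 2
        refine combo3 hO h_1_13_5 h_2_14_3 (a := ((31/228) * x 0 + (-7/228) * x 1 + (1/19) * x 2)) (b := ((-11/36) * x 0 + (-1/36) * x 1 + (1/3) * x 2)) (c := ((2/9) * x 0 + (1/9) * x 1 + (-1/3) * x 2)) (by linarith) (by linarith) (by linarith) (by linarith) ?_ ?_ ?_ <;> (norm_num; try linarith)
      · -- triangle 3
        refine combo3 hO h_2_14_3 h_5d2_14_5d2 (a := ((42/437) * x 0 + (-15/437) * x 1 + (42/437) * x 2)) (b := ((-1) * x 0 + (1) * x 2)) (c := ((22/23) * x 0 + (2/23) * x 1 + (-24/23) * x 2)) (by linarith) (by linarith) (by linarith) (by linarith) ?_ ?_ ?_ <;> (norm_num; try linarith)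
    · rcases le_total (2 * x 2 - 3 * x 0 + x 1) 0 with hL1 | hL1
      · -- triangle 1
        refine combo3 hO h_9_9_1 h_5_13_1 (a := ((-3/304) * x 0 + (-3/304) * x 1 + (27/152) * x 2)) (b := ((3/16) * x 0 + (-1/16) * x 1 + (-1/8) * x 2)) (c := ((-1/8) * x 0 + (1/8) * x 1)) (by linarith) (by linarith) (by linarith) (by linarith) ?_ ?_ ?_ <;> (norm_num; try linarith)
      rcases le_total (11 * x 2 - 12 * x 0 + x 1) 0 with hL2 | hL2
      · -- triangle 2
        refine combo3 hO h_5_13_1 h_3_14_2 (a := ((1/19) * x 0 + (-7/228) * x 1 + (31/228) * x 2)) (b := ((1/3) * x 0 + (-1/36) * x 1 + (-11/36) * x 2)) (c := ((-1/3) * x 0 + (1/9) * x 1 + (2/9) * x 2)) (by linarith) (by linarith) (by linarith) (by linarith) ?_ ?_ ?_ <;> (norm_num; try linarith)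
      · -- triangle 3
        refine combo3 hO h_3_14_2 h_5d2_14_5d2 (a := ((42/437) * x 0 + (-15/437) * x 1 + (42/437) * x 2)) (b := ((1) * x 0 + (-1) * x 2)) (c := ((-24/23) * x 0 + (2/23) * x 1 + (22/23) * x 2)) (by linarith) (by linarith) (by linarith) (by linarith) ?_ ?_ ?_ <;> (norm_num; try linarith)
    · rcases le_total (2 * x 1 - 3 * x 0 + x 2) 0 with hL1 | hL1
      · -- triangle 1
        refine combo3 hO h_9_1_9 h_5_1_13 (a := ((-3/304) * x 0 + (27/152) * x 1 + (-3/304) * x 2)) (b := ((3/16) * x 0 + (-1/8) * x 1 + (-1/16) * x 2)) (c := ((-1/8) * x 0 + (1/8) * x 2)) (by linarith) (by linarith) (by linarith) (by linarith) ?_ ?_ ?_ <;> (norm_num; try linarith)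
      rcases le_total (11 * x 1 - 12 * x 0 + x 2) 0 with hL2 | hL2
      · -- triangle 2
        refine combo3 hO h_5_1_13 h_3_2_14 (a := ((1/19) * x 0 + (31/228) * x 1 + (-7/228) * x 2)) (b := ((1/3) * x 0 + (-11/36) * x 1 + (-1/36) * x 2)) (c := ((-1/3) * x 0 + (2/9) * x 1 + (1/9) * x 2)) (by linarith) (by linarith) (by linarith) (by linarith) ?_ ?_ ?_ <;> (norm_num; try linarith)
      · -- triangle 3
        refine combo3 hO h_3_2_14 h_5d2_5d2_14 (a := ((42/437) * x 0 + (42/437) * x 1 + (-15/437) * x 2)) (b := ((1) * x 0 + (-1) * x 1)) (c := ((-24/23) * x 0 + (22/23) * x 1 + (2/23) * x 2)) (by linarith) (by linarith) (by linarith) (by linarith) ?_ ?_ ?_ <;> (norm_num; try linarith)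
    · rcases le_total (2 * x 1 - 3 * x 2 + x 0) 0 with hL1 | hL1
      · -- triangle 1
        refine combo3 hO h_9_1_9 h_13_1_5 (a := ((-3/304) * x 0 + (27/152) * x 1 + (-3/304) * x 2)) (b := ((-1/16) * x 0 + (-1/8) * x 1 + (3/16) * x 2)) (c := ((1/8) * x 0 + (-1/8) * x 2)) (by linarith) (by linarith) (by linarith) (by linarith) ?_ ?_ ?_ <;> (norm_num; try linarith)
      rcases le_total (11 * x 1 - 12 * x 2 + x 0) 0 with hL2 | hL2
      · -- triangle 2
        refine combo3 hO h_13_1_5 h_14_2_3 (a := ((-7/228) * x 0 + (31/228) * x 1 + (1/19) * x 2)) (b := ((-1/36) * x 0 + (-11/36) * x 1 + (1/3) * x 2)) (c := ((1/9) * x 0 + (2/9) * x 1 + (-1/3) * x 2)) (by linarith) (by linarith) (by linarith) (by linarith) ?_ ?_ ?_ <;> (norm_num; try linarith)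
      · -- triangle 3
        refine combo3 hO h_14_2_3 h_14_5d2_5d2 (a := ((-15/437) * x 0 + (42/437) * x 1 + (42/437) * x 2)) (b := ((-1) * x 1 + (1) * x 2)) (c := ((2/23) * x 0 + (22/23) * x 1 + (-24/23) * x 2)) (by linarith) (by linarith) (by linarith) (by linarith) ?_ ?_ ?_ <;> (norm_num; try linarith)
    · refine combo3 hO hO hO (a := 1) (b := 0) (c := 0) (by norm_num) (by norm_num) (by norm_num) (by norm_num) ?_ ?_ ?_ <;> (norm_num; linarith)
    · rcases le_total (2 * x 2 - 3 * x 1 + x 0) 0 with hL1 | hL1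
      · -- triangle 1
        refine combo3 hO h_9_9_1 h_13_5_1 (a := ((-3/304) * x 0 + (-3/304) * x 1 + (27/152) * x 2)) (b := ((-1/16) * x 0 + (3/16) * x 1 + (-1/8) * x 2)) (c := ((1/8) * x 0 + (-1/8) * x 1)) (by linarith) (by linarith) (by linarith) (by linarith) ?_ ?_ ?_ <;> (norm_num; try linarith)
      rcases le_total (11 * x 2 - 12 * x 1 + x 0) 0 with hL2 | hL2
      · -- triangle 2
        refine combo3 hO h_13_5_1 h_14_3_2 (a := ((-7/228) * x 0 + (1/19) * x 1 + (31/228) * x 2)) (b := ((-1/36) * x 0 + (1/3) * x 1 + (-11/36) * x 2)) (c := ((1/9) * x 0 + (-1/3) * x 1 + (2/9) * x 2)) (by linarith) (by linarith) (by linarith) (by linarith) ?_ ?_ ?_ <;> (norm_num; try linarith)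
      · -- triangle 3
        refine combo3 hO h_14_3_2 h_14_5d2_5d2 (a := ((-15/437) * x 0 + (42/437) * x 1 + (42/437) * x 2)) (b := ((1) * x 1 + (-1) * x 2)) (c := ((2/23) * x 0 + (-24/23) * x 1 + (22/23) * x 2)) (by linarith) (by linarith) (by linarith) (by linarith) ?_ ?_ ?_ <;> (norm_num; try linarith)
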